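/- Ciphertext indistinguishability for the entanglement-based scheme with t−1 extra public-key copies (completion of Theorem 6 of [Pan10]): for n ≥ 1 and t ≥ 1, (1/2)·‖ (1/2^{n−1}) Σ_{k ∈ Ω_n} ( (ρ_k^0 − ρ_k^1) ⊗ (ρ_k^0)^{⊗(t−1)} ) ‖_tr ≤ √(2^t / 2^{n−1}) (equivalently, at most √(1/2^{n−t−1})), where the tensor product of the difference with t−1 copies means the tensor product over Fin t of the family whose first slot is ρ_k^0 (resp. ρ_k^1) and remaining slots are ρ_k^0, subtracted. -/

import Mathlib

open Matrix Finset ComplexOrder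

/-- Hamming weight of a bit string. -/
def hammingW {n : ℕ} (ν : Fin n → ZMod 2) : ℕ :=
  (Finset.univ.filter fun l => ν l = 1).card

/-- `Ω_n`: the bit strings of length `n` with odd Hamming weight. -/
def Omega (n : ℕ) : Finset (Fin n → ZMod 2) :=
  Finset.univ.filter fun k => Odd (hammingW k)

/-- The public-key state `ρ_k^0`. -/
noncomputable def rho0 (n : ℕ) (k : Fin n → ZMod 2) :
    Matrix (Fin n → ZMod 2) (Fin n → ZMod 2) ℂ :=
  (1 / 2 ^ n : ℂ) •
    ∑ i : Fin n → ZMod 2, ∑ x : ZMod 2, Matrix.single i (i + x • k) (1 : ℂ)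

/-- The ciphertext state `ρ_k^1` of the bit `1`. -/
noncomputable def rho1 (n : ℕ) (k : Fin n → ZMod 2) :
    Matrix (Fin n → ZMod 2) (Fin n → ZMod 2) ℂ :=
  (1 / 2 ^ n : ℂ) •
    ∑ i : Fin n → ZMod 2, ∑ x : ZMod 2,
      ((-1 : ℂ) ^ x.val) • Matrix.single i (i + x • k) (1 : ℂ)

/-- Tensor product of a `t`-indexed family of matrices over index type `m`. -/
def tensT {t : ℕ} {m : Type*} [Fintype m] (ρ : Fin t → Matrix m m ℂ) :
    Matrix (Fin t → m) (Fin t → m) ℂ :=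
  Matrix.of fun u v => ∏ s, ρ s (u s) (v s)

/-- `|A|` is the positive semidefinite square root of `AᴴA`. -/
noncomputable def matAbs {m : Type*} [Fintype m] [DecidableEq m] (A : Matrix m m ℂ) :
    Matrix m m ℂ :=
  (Matrix.posSemidef_conjTranspose_mul_self A).1.eigenvectorUnitary.1 *
    Matrix.diagonal ((↑) ∘ (√·) ∘ (Matrix.posSemidef_conjTranspose_mul_self A).1.eigenvalues) *
    (star (Matrix.posSemidef_conjTranspose_mul_self A).1.eigenvectorUnitary : Matrix m m ℂ)

/-- The trace norm `‖A‖_tr = tr |A|` (a real number). -/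
noncomputable def traceNorm {m : Type*} [Fintype m] [DecidableEq m] (A : Matrix m m ℂ) : ℝ :=
  (matAbs A).trace.re

/-! ### Auxiliary lemmas -/

lemma matAbs_herm {m : Type*} [Fintype m] [DecidableEq m] (A : Matrix m m ℂ) :
    (matAbs A)ᴴ = matAbs A := by
  unfold matAbs
  rw [conjTranspose_mul, conjTranspose_mul, diagonal_conjTranspose]
  simp [Matrix.mul_assoc, Matrix.star_eq_conjTranspose]
  congr 3
  funext i
  simp

lemma matAbs_mul_self {m : Type*} [Fintype m] [DecidableEq m] (A : Matrix m m ℂ) :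
    matAbs A * matAbs A = Aᴴ * A := by
  set hP := Matrix.posSemidef_conjTranspose_mul_self A
  unfold matAbs
  conv_rhs => rw [hP.1.spectral_theorem, Unitary.conjStarAlgAut_apply]
  have hU := Unitary.coe_star_mul_self hP.1.eigenvectorUnitary
  calc _ = (hP.1.eigenvectorUnitary : Matrix m m ℂ) *
        (Matrix.diagonal ((↑) ∘ (√·) ∘ hP.1.eigenvalues) *
          ((star hP.1.eigenvectorUnitary : Matrix m m ℂ) * (hP.1.eigenvectorUnitary : Matrix m m ℂ)) *
          Matrix.diagonal ((↑) ∘ (√·) ∘ hP.1.eigenvalues)) *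
        (star hP.1.eigenvectorUnitary : Matrix m m ℂ) := by
          simp only [Matrix.mul_assoc]
    _ = _ := by
      rw [hU, Matrix.mul_one, diagonal_mul_diagonal]
      congr 3
      funext i
      simp only [Function.comp_apply]
      rw [← Complex.ofReal_mul, Real.mul_self_sqrt (hP.eigenvalues_nonneg i)]
      rfl

lemma frob_trace {m : Type*} [Fintype m] [DecidableEq m] (B : Matrix m m ℂ) :
    (Bᴴ * B).trace.re = ∑ i, ∑ j, ‖B i j‖ ^ 2 := by
  rw [Matrix.trace]
  simp only [Matrix.diag, Matrix.mul_apply, Matrix.conjTranspose_apply, Complex.re_sum]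
  rw [Finset.sum_comm]
  congr 1; ext i; congr 1; ext j
  rw [show star (B i j) * B i j = (starRingEnd ℂ) (B i j) * B i j from rfl,
    mul_comm, Complex.mul_conj]
  simp only [Complex.ofReal_re, Complex.normSq_eq_norm_sq]

lemma traceNorm_le {m : Type*} [Fintype m] [DecidableEq m] (A : Matrix m m ℂ) :
    traceNorm A ≤ Real.sqrt ((Fintype.card m : ℝ) * ∑ i, ∑ j, ‖A i j‖ ^ 2) := by
  set S := matAbs A with hSdef
  have hS : Sᴴ = S := matAbs_herm A
  have hSq : S * S = Aᴴ * A := matAbs_mul_self A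
  have herm : Sᴴ = S := hS
  have hfS : ∑ i, ∑ j, ‖S i j‖ ^ 2 = ∑ i, ∑ j, ‖A i j‖ ^ 2 := by
    rw [← frob_trace S, ← frob_trace A, herm, hSq]
  have key : traceNorm A ^ 2 ≤ (Fintype.card m : ℝ) * ∑ i, ∑ j, ‖A i j‖ ^ 2 := by
    rw [← hfS]
    have h1 : traceNorm A = ∑ i, (S i i).re := by
      rw [traceNorm, ← hSdef, Matrix.trace, Complex.re_sum]; rfl
    rw [h1]
    calc (∑ i, (S i i).re) ^ 2 ≤ (Fintype.card m : ℝ) * ∑ i, (S i i).re ^ 2 := by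
          simpa using sq_sum_le_card_mul_sum_sq (s := (univ : Finset m))
            (f := fun i => (S i i).re)
      _ ≤ (Fintype.card m : ℝ) * ∑ i, ∑ j, ‖S i j‖ ^ 2 := by
          apply mul_le_mul_of_nonneg_left _ (by positivity)
          apply Finset.sum_le_sum
          intro i _
          calc (S i i).re ^ 2 = |(S i i).re| ^ 2 := (sq_abs _).symm
            _ ≤ ‖S i i‖ ^ 2 := by
                exact pow_le_pow_left₀ (abs_nonneg _) (Complex.abs_re_le_norm _) 2
            _ ≤ ∑ j, ‖S i j‖ ^ 2 :=
                Finset.single_le_sum (f := fun j => ‖S i j‖ ^ 2)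
                  (fun j _ => by positivity) (mem_univ i)
  calc traceNorm A ≤ |traceNorm A| := le_abs_self _
    _ = Real.sqrt (traceNorm A ^ 2) := (Real.sqrt_sq_eq_abs _).symm
    _ ≤ _ := Real.sqrt_le_sqrt key

lemma sum_zmod_two {M : Type*} [AddCommMonoid M] (f : ZMod 2 → M) :
    ∑ x : ZMod 2, f x = f 0 + f 1 := Fin.sum_univ_two f

lemma rho0_apply (n : ℕ) (k a b : Fin n → ZMod 2) :
    rho0 n k a b = (1 / 2 ^ n : ℂ) *
      ((if b = a then 1 else 0) + (if b = a + k then 1 else 0)) := by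
  rw [rho0, Matrix.smul_apply, smul_eq_mul]
  congr 1
  simp only [Matrix.sum_apply]
  rw [Finset.sum_comm, sum_zmod_two]
  simp [Matrix.single, Matrix.of_apply, ite_and, Finset.sum_ite_eq, eq_comm]

lemma rho1_apply (n : ℕ) (k a b : Fin n → ZMod 2) :
    rho1 n k a b = (1 / 2 ^ n : ℂ) *
      ((if b = a then 1 else 0) - (if b = a + k then 1 else 0)) := by
  rw [rho1, Matrix.smul_apply, smul_eq_mul]
  congr 1
  simp only [Matrix.sum_apply, Matrix.smul_apply, smul_eq_mul]
  rw [Finset.sum_comm, sum_zmod_two]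
  have h0 : ((0 : ZMod 2)).val = 0 := rfl
  have h1 : ((1 : ZMod 2)).val = 1 := rfl
  simp [Matrix.single, Matrix.of_apply, ite_and, Finset.sum_ite_eq, eq_comm, h0, h1]
  split_ifs <;> ring

lemma diff_apply (n t : ℕ) (ht : 1 ≤ t) (k : Fin n → ZMod 2) (hk : k ≠ 0)
    (u v : Fin t → (Fin n → ZMod 2)) :
    (tensT (fun _ : Fin t => rho0 n k)
      - tensT (fun s : Fin t => if s.val = 0 then rho1 n k else rho0 n k)) u v
    = (2 / 2 ^ n * (1 / 2 ^ n) ^ (t - 1) : ℂ) *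
      (if (v ⟨0, ht⟩ = u ⟨0, ht⟩ + k ∧
          ∀ s, s ≠ (⟨0, ht⟩ : Fin t) → (v s = u s ∨ v s = u s + k)) then 1 else 0) := by
  set z : Fin t := ⟨0, ht⟩ with hz
  have e1 : tensT (fun _ : Fin t => rho0 n k) u v
      = rho0 n k (u z) (v z) * ∏ s ∈ univ.erase z, rho0 n k (u s) (v s) :=
    (Finset.mul_prod_erase _ _ (mem_univ z)).symm
  have e2 : tensT (fun s : Fin t => if s.val = 0 then rho1 n k else rho0 n k) u v
      = rho1 n k (u z) (v z) * ∏ s ∈ univ.erase z, rho0 n k (u s) (v s) := by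
    show (∏ s, (if s.val = 0 then rho1 n k else rho0 n k) (u s) (v s)) = _
    rw [← Finset.mul_prod_erase _ _ (mem_univ z)]
    have h1 : (if (z : Fin t).val = 0 then rho1 n k else rho0 n k) = rho1 n k := if_pos rfl
    rw [h1]
    congr 1
    apply Finset.prod_congr rfl
    intro s hs
    have hs0 : s.val ≠ 0 := fun h => (Finset.mem_erase.mp hs).1 (Fin.ext h)
    rw [if_neg hs0]
  rw [Matrix.sub_apply, e1, e2, ← sub_mul]
  have hd : rho0 n k (u z) (v z) - rho1 n k (u z) (v z)
      = (2 / 2 ^ n : ℂ) * (if v z = u z + k then 1 else 0) := by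
    rw [rho0_apply, rho1_apply]; ring
  have hero : ∏ s ∈ univ.erase z, rho0 n k (u s) (v s)
      = ((1 / 2 ^ n : ℂ)) ^ (t - 1) *
        (if (∀ s ∈ univ.erase z, (v s = u s ∨ v s = u s + k)) then 1 else 0) := by
    have hone : ∀ a b : Fin n → ZMod 2, rho0 n k a b
        = (1 / 2 ^ n : ℂ) * (if (b = a ∨ b = a + k) then 1 else 0) := by
      intro a b
      rw [rho0_apply]
      congr 1
      by_cases h1 : b = a <;> by_cases h2 : b = a + k
      · rw [h1] at h2; exact absurd (left_eq_add.mp h2) hk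
      all_goals simp [h1, h2, hk]
    calc ∏ s ∈ univ.erase z, rho0 n k (u s) (v s)
        = ∏ s ∈ univ.erase z,
            ((1 / 2 ^ n : ℂ) * (if (v s = u s ∨ v s = u s + k) then 1 else 0)) :=
          Finset.prod_congr rfl fun s _ => hone _ _
      _ = (1 / 2 ^ n : ℂ) ^ (t - 1) *
            ∏ s ∈ univ.erase z, (if (v s = u s ∨ v s = u s + k) then (1:ℂ) else 0) := by
          rw [Finset.prod_mul_distrib, Finset.prod_const,
            Finset.card_erase_of_mem (mem_univ z), Finset.card_univ, Fintype.card_fin]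
      _ = _ := by simp [Finset.prod_boole]
  rw [hd, hero]
  have hiff : (∀ s ∈ univ.erase z, (v s = u s ∨ v s = u s + k)) ↔
      (∀ s, s ≠ z → (v s = u s ∨ v s = u s + k)) := by
    simp [Finset.mem_erase]
  by_cases h1 : v z = u z + k <;>
    by_cases h2 : ∀ s, s ≠ z → (v s = u s ∨ v s = u s + k) <;>
    simp [h1, h2, hiff] <;> ring

lemma odd_iff_par {n : ℕ} (k : Fin n → ZMod 2) :
    Odd (hammingW k) ↔ ∑ l, k l = (1 : ZMod 2) := by
  have h1 : (∑ l, k l) = ((hammingW k : ℕ) : ZMod 2) := by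
    rw [hammingW, ← Finset.sum_boole]
    apply Finset.sum_congr rfl
    intro l _
    have : ∀ a : ZMod 2, a = if a = 1 then 1 else 0 := by decide
    exact this (k l)
  rw [h1]
  have h2 : ∀ m : ℕ, ((m : ZMod 2) = 1 ↔ m % 2 = 1) := by
    intro m
    rw [← ZMod.natCast_mod]
    rcases Nat.mod_two_eq_zero_or_one m with h | h <;> simp [h]
  rw [h2, Nat.odd_iff]

lemma omega_ne_zero {n : ℕ} {k : Fin n → ZMod 2} (hk : k ∈ Omega n) : k ≠ 0 := by
  rintro rfl
  rw [Omega, Finset.mem_filter, odd_iff_par] at hk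
  simp at hk

lemma card_omega_le {n : ℕ} (hn : 1 ≤ n) : (Omega n).card ≤ 2 ^ (n - 1) := by
  set l0 : Fin n := ⟨0, hn⟩
  set f : (Fin n → ZMod 2) → (Fin n → ZMod 2) :=
    fun k => Function.update k l0 (k l0 + 1) with hf
  have hpar : ∀ k : Fin n → ZMod 2, ∑ l, f k l = (∑ l, k l) + 1 := by
    intro k
    rw [hf]
    rw [Finset.sum_update_of_mem (mem_univ l0), Finset.sdiff_singleton_eq_erase,
      ← Finset.add_sum_erase _ k (mem_univ l0)]
    ring
  have hinv : ∀ k, f (f k) = k := by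
    intro k
    funext l
    by_cases h : l = l0
    · subst h
      simp [hf, Function.update_self]
      have : ∀ a : ZMod 2, a + 1 + 1 = a := by decide
      exact this _
    · simp [hf, Function.update_of_ne h]
  have hinj : Function.Injective f := Function.LeftInverse.injective hinv
  have hmaps : ∀ k ∈ Omega n,
      f k ∈ univ.filter (fun k => ¬ Odd (hammingW k)) := by
    intro k hk
    rw [Omega, Finset.mem_filter, odd_iff_par] at hk
    rw [Finset.mem_filter, odd_iff_par, hpar, hk.2]
    refine ⟨mem_univ _, ?_⟩
    decide
  have hle : (Omega n).card ≤ (univ.filter (fun k => ¬ Odd (hammingW k))).card :=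
    Finset.card_le_card_of_injOn f hmaps hinj.injOn
  have hsum := Finset.card_filter_add_card_filter_not
    (s := (univ : Finset (Fin n → ZMod 2))) (p := fun k => Odd (hammingW k))
  rw [Finset.card_univ] at hsum
  have hcard : Fintype.card (Fin n → ZMod 2) = 2 ^ n := by simp
  rw [hcard] at hsum
  have hOm : (Omega n).card = (univ.filter (fun k => Odd (hammingW k))).card := rfl
  rw [hOm]
  have h2n : 2 ^ n = 2 * 2 ^ (n - 1) := by
    conv_lhs => rw [show n = (n - 1) + 1 by omega]
    ring
  omega

lemma count_v {n t : ℕ} (ht : 1 ≤ t) (k : Fin n → ZMod 2) (hk : k ≠ 0)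
    (u : Fin t → Fin n → ZMod 2) :
    (univ.filter (fun v : Fin t → Fin n → ZMod 2 =>
      v ⟨0, ht⟩ = u ⟨0, ht⟩ + k ∧
        ∀ s, s ≠ (⟨0, ht⟩ : Fin t) → (v s = u s ∨ v s = u s + k))).card = 2 ^ (t - 1) := by
  set z : Fin t := ⟨0, ht⟩ with hz
  have hset : (univ.filter (fun v : Fin t → Fin n → ZMod 2 =>
      v z = u z + k ∧ ∀ s, s ≠ z → (v s = u s ∨ v s = u s + k)))
      = Fintype.piFinset (fun s => if s = z then {u z + k} else {u s, u s + k}) := by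
    ext v
    simp only [Finset.mem_filter, Finset.mem_univ, true_and, Fintype.mem_piFinset]
    constructor
    · rintro ⟨h1, h2⟩ s
      by_cases hs : s = z
      · subst hs; simp [h1]
      · rcases h2 s hs with h | h <;> simp [hs, h]
    · intro h
      constructor
      · have := h z; simpa using this
      · intro s hs
        have := h s
        rw [if_neg hs] at this
        simpa using this
  rw [hset, Fintype.card_piFinset]
  have hcards : ∀ s : Fin t,
      ((if s = z then ({u z + k} : Finset (Fin n → ZMod 2)) else {u s, u s + k})).card
      = if s = z then 1 else 2 := by
    intro s
    split_ifs with h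
    · simp
    · rw [Finset.card_insert_of_notMem (by
        simp only [Finset.mem_singleton]
        intro hh
        exact hk (left_eq_add.mp hh)), Finset.card_singleton]
  rw [Finset.prod_congr rfl (fun s _ => hcards s)]
  rw [← Finset.mul_prod_erase _ _ (mem_univ z), if_pos rfl, one_mul]
  rw [Finset.prod_congr rfl (fun s hs => if_neg (Finset.mem_erase.mp hs).1),
    Finset.prod_const, Finset.card_erase_of_mem (mem_univ z), Finset.card_univ,
    Fintype.card_fin]

/-- The scaled sum matrix. -/
noncomputable def Mmat (n t : ℕ) : Matrix (Fin t → Fin n → ZMod 2) (Fin t → Fin n → ZMod 2) ℂ :=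
  (1 / 2 ^ (n - 1) : ℂ) • ∑ k ∈ Omega n,
    (tensT (fun _ : Fin t => rho0 n k)
      - tensT (fun s : Fin t => if s.val = 0 then rho1 n k else rho0 n k))

noncomputable def crC (n t : ℕ) : ℝ :=
  (1 / 2 ^ (n - 1)) * (2 / 2 ^ n * (1 / 2 ^ n) ^ (t - 1))

def Ncnt (n t : ℕ) (ht : 1 ≤ t) (u v : Fin t → Fin n → ZMod 2) : ℕ :=
  ((Omega n).filter (fun k =>
    v ⟨0, ht⟩ = u ⟨0, ht⟩ + k ∧
      ∀ s, s ≠ (⟨0, ht⟩ : Fin t) → (v s = u s ∨ v s = u s + k))).card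

lemma Mmat_apply (n t : ℕ) (ht : 1 ≤ t) (u v : Fin t → Fin n → ZMod 2) :
    Mmat n t u v = ((crC n t : ℝ) : ℂ) * (Ncnt n t ht u v : ℂ) := by
  rw [Mmat, Matrix.smul_apply, Matrix.sum_apply, smul_eq_mul]
  rw [Finset.sum_congr rfl
    (fun k hk => diff_apply n t ht k (omega_ne_zero hk) u v)]
  rw [← Finset.mul_sum, Finset.sum_boole]
  rw [crC, Ncnt]
  push_cast
  ring

lemma Ncnt_le_one (n t : ℕ) (ht : 1 ≤ t) (u v : Fin t → Fin n → ZMod 2) :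
    Ncnt n t ht u v ≤ 1 := by
  set z : Fin t := ⟨0, ht⟩ with hz
  have hsub : ((Omega n).filter (fun k =>
      v z = u z + k ∧ ∀ s, s ≠ z → (v s = u s ∨ v s = u s + k)))
      ⊆ {u z + v z} := by
    intro k hk
    rw [Finset.mem_filter] at hk
    rw [Finset.mem_singleton]
    have h1 := hk.2.1
    have hself : ∀ w : Fin n → ZMod 2, w + w = 0 := by
      intro w; funext l
      have : ∀ c : ZMod 2, c + c = 0 := by decide
      exact this _
    rw [h1, ← add_assoc, hself (u z), zero_add]
  calc Ncnt n t ht u v ≤ ({u z + v z} : Finset _).card := Finset.card_le_card hsub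
    _ = 1 := Finset.card_singleton _

lemma sum_Ncnt_le (n t : ℕ) (hn : 1 ≤ n) (ht : 1 ≤ t) (u : Fin t → Fin n → ZMod 2) :
    ∑ v, Ncnt n t ht u v ≤ 2 ^ (n - 1) * 2 ^ (t - 1) := by
  set z : Fin t := ⟨0, ht⟩ with hz
  have heq : ∑ v, Ncnt n t ht u v = (Omega n).card * 2 ^ (t - 1) := by
    calc ∑ v, Ncnt n t ht u v
        = ∑ v : Fin t → Fin n → ZMod 2, ∑ k ∈ Omega n, (if (v z = u z + k ∧
            ∀ s, s ≠ z → (v s = u s ∨ v s = u s + k)) then 1 else 0) := by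
          apply Finset.sum_congr rfl
          intro v _
          rw [Ncnt, Finset.card_filter]
      _ = ∑ k ∈ Omega n, ∑ v : Fin t → Fin n → ZMod 2, (if (v z = u z + k ∧
            ∀ s, s ≠ z → (v s = u s ∨ v s = u s + k)) then 1 else 0) := Finset.sum_comm
      _ = ∑ k ∈ Omega n, 2 ^ (t - 1) := by
          apply Finset.sum_congr rfl
          intro k hk
          rw [← Finset.card_filter]
          exact count_v ht k (omega_ne_zero hk) u
      _ = (Omega n).card * 2 ^ (t - 1) := by
          rw [Finset.sum_const, smul_eq_mul]
  rw [heq]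
  exact Nat.mul_le_mul_right _ (card_omega_le hn)

lemma frob_bound (n t : ℕ) (hn : 1 ≤ n) (ht : 1 ≤ t) :
    ∑ u, ∑ v, ‖Mmat n t u v‖ ^ 2
      ≤ crC n t ^ 2 * (((2:ℝ) ^ n) ^ t * (2 ^ (n - 1) * 2 ^ (t - 1))) := by
  have hnorm : ∀ u v, ‖Mmat n t u v‖ ^ 2
      = crC n t ^ 2 * ((Ncnt n t ht u v : ℝ)) ^ 2 := by
    intro u v
    rw [Mmat_apply n t ht u v, norm_mul, Complex.norm_real, Complex.norm_natCast,
      Real.norm_eq_abs, abs_of_nonneg (by rw [crC]; positivity)]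
    ring
  have h1 : ∀ u v, ‖Mmat n t u v‖ ^ 2 ≤ crC n t ^ 2 * (Ncnt n t ht u v : ℝ) := by
    intro u v
    rw [hnorm]
    apply mul_le_mul_of_nonneg_left _ (by positivity)
    have h2 : (Ncnt n t ht u v : ℝ) ≤ 1 := by exact_mod_cast Ncnt_le_one n t ht u v
    have h3 : (0:ℝ) ≤ Ncnt n t ht u v := Nat.cast_nonneg _
    nlinarith
  calc ∑ u, ∑ v, ‖Mmat n t u v‖ ^ 2
      ≤ ∑ u, ∑ v, crC n t ^ 2 * (Ncnt n t ht u v : ℝ) :=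
        Finset.sum_le_sum fun u _ => Finset.sum_le_sum fun v _ => h1 u v
    _ = ∑ u : Fin t → Fin n → ZMod 2,
          crC n t ^ 2 * ((∑ v, Ncnt n t ht u v : ℕ) : ℝ) := by
        apply Finset.sum_congr rfl
        intro u _
        rw [← Finset.mul_sum]
        push_cast
        ring
    _ ≤ ∑ u : Fin t → Fin n → ZMod 2,
          crC n t ^ 2 * ((2 ^ (n - 1) * 2 ^ (t - 1) : ℕ) : ℝ) := by
        apply Finset.sum_le_sum
        intro u _
        exact mul_le_mul_of_nonneg_left (Nat.cast_le.mpr (sum_Ncnt_le n t hn ht u))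
          (by positivity)
    _ = (Fintype.card (Fin t → Fin n → ZMod 2) : ℝ) *
          (crC n t ^ 2 * ((2 ^ (n - 1) * 2 ^ (t - 1) : ℕ) : ℝ)) := by
        rw [Finset.sum_const, Finset.card_univ, nsmul_eq_mul]
    _ = crC n t ^ 2 * (((2:ℝ) ^ n) ^ t * (2 ^ (n - 1) * 2 ^ (t - 1))) := by
        have hc : Fintype.card (Fin t → Fin n → ZMod 2) = (2 ^ n) ^ t := by simp
        rw [hc]
        push_cast
        ring

/-- Ciphertext indistinguishability for the entanglement-based scheme with `t − 1`
extra public-key copies. -/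
theorem ciphertext_indistinguishability (n t : ℕ) (hn : 1 ≤ n) (ht : 1 ≤ t) :
    (1 / 2) * traceNorm
        ((1 / 2 ^ (n - 1) : ℂ) • ∑ k ∈ Omega n,
          (tensT (fun _ : Fin t => rho0 n k)
            - tensT (fun s : Fin t => if s.val = 0 then rho1 n k else rho0 n k)))
      ≤ Real.sqrt (2 ^ t / 2 ^ (n - 1)) := by
  show (1 / 2) * traceNorm (Mmat n t) ≤ Real.sqrt (2 ^ t / 2 ^ (n - 1))
  set y : ℝ := (2:ℝ) ^ t / 2 ^ (n - 1) with hy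
  have hy0 : (0:ℝ) ≤ y := by positivity
  have hX : ((2:ℝ) ^ n) ^ t *
      (crC n t ^ 2 * (((2:ℝ) ^ n) ^ t * (2 ^ (n - 1) * 2 ^ (t - 1)))) = 2 * y := by
    obtain ⟨a, rfl⟩ : ∃ a, n = a + 1 := ⟨n - 1, by omega⟩
    obtain ⟨b, rfl⟩ : ∃ b, t = b + 1 := ⟨t - 1, by omega⟩
    rw [hy, crC]
    simp only [Nat.add_sub_cancel]
    rw [_root_.one_div_pow, pow_succ ((2:ℝ) ^ (a + 1)) b]
    field_simp
    ring
  have hcardU : (Fintype.card (Fin t → Fin n → ZMod 2) : ℝ) = ((2:ℝ) ^ n) ^ t := by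
    have hc : Fintype.card (Fin t → Fin n → ZMod 2) = (2 ^ n) ^ t := by simp
    rw [hc]; push_cast; ring
  calc (1 / 2) * traceNorm (Mmat n t)
      ≤ (1 / 2) * Real.sqrt ((Fintype.card (Fin t → Fin n → ZMod 2) : ℝ) *
          ∑ u, ∑ v, ‖Mmat n t u v‖ ^ 2) :=
        mul_le_mul_of_nonneg_left (traceNorm_le (Mmat n t)) (by norm_num)
    _ ≤ (1 / 2) * Real.sqrt (2 * y) := by
        apply mul_le_mul_of_nonneg_left _ (by norm_num)
        apply Real.sqrt_le_sqrt
        rw [hcardU, ← hX]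
        exact mul_le_mul_of_nonneg_left (frob_bound n t hn ht) (by positivity)
    _ ≤ Real.sqrt y := by
        have h4 : Real.sqrt (2 * y) ≤ Real.sqrt (4 * y) :=
          Real.sqrt_le_sqrt (by linarith)
        have h5 : Real.sqrt (4 * y) = 2 * Real.sqrt y := by
          rw [show (4:ℝ) * y = (2:ℝ) ^ 2 * y by ring,
            Real.sqrt_mul (by positivity) y, Real.sqrt_sq (by norm_num : (0:ℝ) ≤ 2)]
        linarith [Real.sqrt_nonneg y]
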